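/- If f ∈ K(x) is non-constant and |G_f| = deg f, then the extension K(f) ⊆ K(x) is normal; conversely, if K(f) ⊆ K(x) is separable and normal then |G_f| = deg f. -/

import Mathlib

open Polynomial IntermediateField

noncomputable section LurothAux

namespace Luroth

variable {K : Type*} [Field K]

/-! ### The swap equivalence on `K[t][Y]` -/

/-- The swap homomorphism `R[X][Y] →+* R[X][Y]` exchanging the two variables. -/
def swapHom (R : Type*) [CommSemiring R] :
    Polynomial (Polynomial R) →+* Polynomial (Polynomial R) :=
  eval₂RingHom
    (eval₂RingHom ((C : Polynomial R →+* Polynomial (Polynomial R)).comp (C : R →+* Polynomial R))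
      X)
    (C X)

lemma swapHom_C_C (R : Type*) [CommSemiring R] (a : R) :
    swapHom R (C (C a)) = C (C a) := by
  simp [swapHom]

lemma swapHom_C_X (R : Type*) [CommSemiring R] :
    swapHom R (C X) = X := by
  simp [swapHom]

lemma swapHom_X (R : Type*) [CommSemiring R] :
    swapHom R X = C X := by
  simp [swapHom]

lemma swapHom_comp_swapHom (R : Type*) [CommSemiring R] :
    (swapHom R).comp (swapHom R) = RingHom.id _ := by
  apply Polynomial.ringHom_ext'
  · apply Polynomial.ringHom_ext'
    · ext a
      simp [swapHom_C_C]
    · simp [RingHom.comp_apply, swapHom_C_X, swapHom_X]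
  · simp [RingHom.comp_apply, swapHom_C_X, swapHom_X]

/-- The swap ring equivalence. -/
def swapEquiv (R : Type*) [CommSemiring R] :
    Polynomial (Polynomial R) ≃+* Polynomial (Polynomial R) :=
  RingEquiv.ofRingHom (swapHom R) (swapHom R) (swapHom_comp_swapHom R) (swapHom_comp_swapHom R)

lemma swapHom_C (R : Type*) [CommSemiring R] (p : Polynomial R) :
    swapHom R (C p) = p.map (C : R →+* Polynomial R) := by
  rw [swapHom, coe_eval₂RingHom, eval₂_C]
  rfl

/-! ### The bivariate polynomials `G` and `H` -/

/-- `G(t,Y) = num(Y) - t * denom(Y)` in `K[t][Y]`. -/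
def GG (f : RatFunc K) : Polynomial (Polynomial K) :=
  f.num.map (C : K →+* Polynomial K) - C X * f.denom.map (C : K →+* Polynomial K)

/-- `H(x,Y) = num(x) - denom(x) * Y` in `K[x][Y]`. -/
def HH (f : RatFunc K) : Polynomial (Polynomial K) :=
  C f.num - C f.denom * X

lemma swapHom_HH (f : RatFunc K) : swapHom K (HH f) = GG f := by
  rw [HH, map_sub, map_mul, swapHom_C, swapHom_C, swapHom_X, GG]
  ring

lemma GG_coeff (f : RatFunc K) (i : ℕ) :
    (GG f).coeff i = C (f.num.coeff i) - C (f.denom.coeff i) * X := by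
  simp only [GG, coeff_sub, coeff_map, coeff_C_mul]
  ring

lemma hf_ne {f : RatFunc K} (hf : f ∉ Set.range (algebraMap K (RatFunc K)))
    {a b : K} (hb : b ≠ 0)
    (h : algebraMap K (RatFunc K) a - f * algebraMap K (RatFunc K) b = 0) : False := by
  apply hf
  refine ⟨a / b, ?_⟩
  have hb' : algebraMap K (RatFunc K) b ≠ 0 := by
    simpa using (algebraMap K (RatFunc K)).injective.ne_iff.mpr hb
  rw [map_div₀, div_eq_iff hb']
  linear_combination h

lemma f_ne_zero {f : RatFunc K} (hf : f ∉ Set.range (algebraMap K (RatFunc K))) : f ≠ 0 := by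
  rintro rfl
  exact hf ⟨0, by simp⟩

lemma deg_pos {f : RatFunc K} (hf : f ∉ Set.range (algebraMap K (RatFunc K))) :
    1 ≤ f.num.natDegree ⊔ f.denom.natDegree := by
  by_contra h
  push_neg at h
  rw [Nat.lt_one_iff, Nat.max_eq_zero_iff] at h
  obtain ⟨hnum, hd⟩ := h
  · obtain ⟨a, ha⟩ := natDegree_eq_zero.mp hnum
    obtain ⟨b, hb⟩ := natDegree_eq_zero.mp hd
    apply hf
    refine ⟨a / b, ?_⟩
    have hb0 : b ≠ 0 := by
      intro h0
      exact f.denom_ne_zero (by rw [← hb, h0, map_zero])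
    rw [map_div₀, ← RatFunc.num_div_denom f, ← ha, ← hb, RatFunc.algebraMap_C,
      RatFunc.algebraMap_C, RatFunc.algebraMap_eq_C]

lemma GG_coeff_deg_ne {f : RatFunc K} (hf : f ∉ Set.range (algebraMap K (RatFunc K))) :
    (GG f).coeff (f.num.natDegree ⊔ f.denom.natDegree) ≠ 0 := by
  set n := f.num.natDegree ⊔ f.denom.natDegree with hn
  rw [GG_coeff]
  intro h
  by_cases hd : f.denom.coeff n = 0
  · have hdn : f.denom.natDegree ≠ n := by
      intro he
      exact (leadingCoeff_ne_zero.mpr f.denom_ne_zero) (by rwa [leadingCoeff, he])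
    have hnn : f.num.natDegree = n := by
      rcases max_cases f.num.natDegree f.denom.natDegree with ⟨h1, _⟩ | ⟨h1, _⟩ <;> omega
    have hnum0 : f.num.coeff n ≠ 0 := by
      rw [← hnn]
      exact leadingCoeff_ne_zero.mpr (RatFunc.num_ne_zero (f_ne_zero hf))
    rw [hd, map_zero, zero_mul, sub_zero] at h
    exact hnum0 (by simpa using h)
  · have := congrArg (fun p => Polynomial.coeff p 1) h
    simp at this
    exact hd this

lemma GG_natDegree {f : RatFunc K} (hf : f ∉ Set.range (algebraMap K (RatFunc K))) :
    (GG f).natDegree = f.num.natDegree ⊔ f.denom.natDegree := by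
  refine le_antisymm (natDegree_le_iff_coeff_eq_zero.2 fun N hN => ?_)
    (le_natDegree_of_ne_zero (GG_coeff_deg_ne hf))
  rw [GG_coeff, coeff_eq_zero_of_natDegree_lt (lt_of_le_of_lt (le_max_left _ _) hN),
    coeff_eq_zero_of_natDegree_lt (lt_of_le_of_lt (le_max_right _ _) hN)]
  simp

lemma HH_coeff_zero (f : RatFunc K) : (HH f).coeff 0 = f.num := by simp [HH]

lemma HH_coeff_one (f : RatFunc K) : (HH f).coeff 1 = -f.denom := by simp [HH]

lemma HH_isPrimitive (f : RatFunc K) : (HH f).IsPrimitive := by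
  intro r hr
  rw [C_dvd_iff_dvd_coeff] at hr
  refine (RatFunc.isCoprime_num_denom f).isUnit_of_dvd' ?_ ?_
  · simpa [HH_coeff_zero] using hr 0
  · have := hr 1
    rw [HH_coeff_one] at this
    exact (dvd_neg.mp this)

lemma HH_map_degree (f : RatFunc K) :
    ((HH f).map (algebraMap (Polynomial K) (RatFunc K))).degree = 1 := by
  have h1 : (HH f).map (algebraMap (Polynomial K) (RatFunc K)) =
      C (-(algebraMap (Polynomial K) (RatFunc K) f.denom)) * X +
        C (algebraMap (Polynomial K) (RatFunc K) f.num) := by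
    simp only [HH, Polynomial.map_sub, Polynomial.map_mul, map_C, map_X, map_neg]
    ring
  rw [h1]
  exact degree_linear (neg_ne_zero.mpr (RatFunc.algebraMap_ne_zero f.denom_ne_zero))

lemma HH_irreducible (f : RatFunc K) : Irreducible (HH f) := by
  letI := Classical.decEq K
  exact (HH_isPrimitive f).irreducible_iff_irreducible_map_fraction_map.mpr
    (irreducible_of_degree_eq_one (HH_map_degree f))

lemma GG_irreducible (f : RatFunc K) : Irreducible (GG f) := by
  have h : swapEquiv K (HH f) = GG f := swapHom_HH f
  rw [← h]
  exact (MulEquiv.irreducible_iff (swapEquiv K)).mpr (HH_irreducible f)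

lemma GG_isPrimitive {f : RatFunc K} (hf : f ∉ Set.range (algebraMap K (RatFunc K))) :
    (GG f).IsPrimitive := by
  intro r hr
  obtain ⟨s, hs⟩ := hr
  rcases (GG_irreducible f).isUnit_or_isUnit hs with h | h
  · exact Polynomial.isUnit_C.mp h
  · exfalso
    obtain ⟨u, hu, hus⟩ := Polynomial.isUnit_iff.mp h
    have : (GG f).natDegree = 0 := by
      rw [hs, ← hus, ← Polynomial.C_mul, natDegree_C]
    rw [GG_natDegree hf] at this
    have := deg_pos hf
    omega

lemma GGm_irreducible {f : RatFunc K} (hf : f ∉ Set.range (algebraMap K (RatFunc K))) :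
    Irreducible ((GG f).map (algebraMap (Polynomial K) (RatFunc K))) := by
  letI := Classical.decEq K
  exact (GG_isPrimitive hf).irreducible_iff_irreducible_map_fraction_map.mp (GG_irreducible f)

/-! ### Basic facts about `f` -/

lemma aeval_ratfuncX (p : Polynomial K) :
    Polynomial.aeval (RatFunc.X : RatFunc K) p = algebraMap (Polynomial K) (RatFunc K) p := by
  have h := Polynomial.aeval_algHom_apply
    (IsScalarTower.toAlgHom K (Polynomial K) (RatFunc K)) X p
  rw [Polynomial.aeval_X_left_apply] at h
  rw [← RatFunc.algebraMap_X (K := K)]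
  exact h

lemma key0 (f : RatFunc K) :
    algebraMap (Polynomial K) (RatFunc K) f.num
      - f * algebraMap (Polynomial K) (RatFunc K) f.denom = 0 := by
  rw [sub_eq_zero]
  exact (div_eq_iff (RatFunc.algebraMap_ne_zero f.denom_ne_zero)).mp
    (RatFunc.num_div_denom f)

/-- The defining polynomial of `X` over `K⟮f⟯`, used before we know `f` is transcendental. -/
def F0 (f : RatFunc K) : Polynomial (adjoin K {f}) :=
  f.num.map (algebraMap K (adjoin K {f}))
    - C (⟨f, mem_adjoin_simple_self K f⟩ : adjoin K {f})
        * f.denom.map (algebraMap K (adjoin K {f}))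

lemma aeval_F0 (f : RatFunc K) : Polynomial.aeval (RatFunc.X : RatFunc K) (F0 f) = 0 := by
  have h0 : (algebraMap (adjoin K {f}) (RatFunc K))
      (⟨f, mem_adjoin_simple_self K f⟩ : adjoin K {f}) = f := rfl
  rw [F0, map_sub, map_mul, Polynomial.aeval_map_algebraMap, Polynomial.aeval_map_algebraMap,
    Polynomial.aeval_C, h0, aeval_ratfuncX, aeval_ratfuncX]
  exact key0 f

lemma F0_ne_zero {f : RatFunc K} (hf : f ∉ Set.range (algebraMap K (RatFunc K))) :
    F0 f ≠ 0 := by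
  intro h
  have h2 := congrArg (fun p => Polynomial.coeff p f.denom.natDegree) h
  simp only [F0, coeff_sub, coeff_map, coeff_C_mul, coeff_zero] at h2
  have h3 : algebraMap K (RatFunc K) (f.num.coeff f.denom.natDegree)
      - f * algebraMap K (RatFunc K) (f.denom.coeff f.denom.natDegree) = 0 := by
    simpa using congrArg (fun z : (adjoin K {f} : IntermediateField K (RatFunc K)) =>
      (z : RatFunc K)) h2
  exact hf_ne hf (leadingCoeff_ne_zero.mpr f.denom_ne_zero) h3

lemma transcendental_f {f : RatFunc K} (hf : f ∉ Set.range (algebraMap K (RatFunc K))) :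
    Transcendental K f := by
  intro halg
  have hint : IsIntegral K f := halg.isIntegral
  haveI : FiniteDimensional K (adjoin K {f}) := adjoin.finiteDimensional hint
  have h1 : IsIntegral (adjoin K {f}) (RatFunc.X : RatFunc K) :=
    (IsAlgebraic.isIntegral ⟨F0 f, F0_ne_zero hf, aeval_F0 f⟩)
  have h2 : IsIntegral K (RatFunc.X : RatFunc K) := isIntegral_trans _ h1
  have h3 : Transcendental K (RatFunc.X : RatFunc K) := by
    rw [← RatFunc.algebraMap_X (K := K)]
    exact (transcendental_algebraMap_iff
      (IsFractionRing.injective (Polynomial K) (RatFunc K))).mpr (Polynomial.transcendental_X K)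
  exact h3 h2.isAlgebraic

/-! ### The isomorphism `K(x) ≃ K⟮f⟯` -/

variable {f : RatFunc K}

/-- The embedding `K(x) → K(x)` sending `X` to `f`. -/
def phi (hT : Transcendental K f) : RatFunc K →ₐ[K] RatFunc K :=
  RatFunc.liftAlgHom (Polynomial.aeval f)
    (nonZeroDivisors_le_comap_nonZeroDivisors_of_injective _
      (transcendental_iff_injective.mp hT))

lemma phi_algebraMap (hT : Transcendental K f) (p : Polynomial K) :
    phi hT (algebraMap (Polynomial K) (RatFunc K) p) = Polynomial.aeval f p := by
  have := RatFunc.liftAlgHom_apply_div' (Polynomial.aeval f)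
    (nonZeroDivisors_le_comap_nonZeroDivisors_of_injective _
      (transcendental_iff_injective.mp hT)) p 1
  simpa [phi] using this

lemma phi_X (hT : Transcendental K f) : phi hT RatFunc.X = f := by
  rw [← RatFunc.algebraMap_X (K := K), phi_algebraMap, Polynomial.aeval_X]

lemma phi_injective (hT : Transcendental K f) : Function.Injective (phi hT) :=
  RatFunc.liftAlgHom_injective _ (transcendental_iff_injective.mp hT)

lemma phi_mem (hT : Transcendental K f) (y : RatFunc K) : phi hT y ∈ adjoin K {f} := by
  induction y using RatFunc.induction_on with
  | f p q hq =>
    rw [map_div₀, phi_algebraMap, phi_algebraMap]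
    exact div_mem
      (algebra_adjoin_le_adjoin K {f} (Polynomial.aeval_mem_adjoin_singleton K f))
      (algebra_adjoin_le_adjoin K {f} (Polynomial.aeval_mem_adjoin_singleton K f))

/-- `phi` corestricted to `K⟮f⟯`. -/
def psi (hT : Transcendental K f) : RatFunc K →+* adjoin K {f} :=
  ((phi hT : RatFunc K →+* RatFunc K)).codRestrict (adjoin K {f}).toSubring (phi_mem hT)

lemma psi_coe (hT : Transcendental K f) (y : RatFunc K) :
    (psi hT y : RatFunc K) = phi hT y := rfl

lemma psi_bijective (hT : Transcendental K f) : Function.Bijective (psi hT) := by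
  constructor
  · intro a b hab
    apply phi_injective hT
    rw [← psi_coe hT, hab, psi_coe]
  · rintro ⟨e, he⟩
    have hle : adjoin K {f} ≤ (phi hT).fieldRange := by
      rw [adjoin_le_iff]
      rintro y rfl
      exact ⟨RatFunc.X, phi_X hT⟩
    obtain ⟨y, hy⟩ := (AlgHom.mem_fieldRange).mp (hle he)
    exact ⟨y, Subtype.ext (by rw [psi_coe, hy])⟩

/-- `psi` as ring equivalence. -/
def psiEquiv (hT : Transcendental K f) : RatFunc K ≃+* adjoin K {f} :=
  RingEquiv.ofBijective (psi hT) (psi_bijective hT)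


/-! ### The minimal polynomial of `X` over `K⟮f⟯` and the degree of the extension -/

/-- The minimal polynomial (up to scaling) of `X` over `K⟮f⟯`. -/
def Fpoly (hf : f ∉ Set.range (algebraMap K (RatFunc K))) : Polynomial (adjoin K {f}) :=
  (GG f).map ((psi (transcendental_f hf)).comp (algebraMap (Polynomial K) (RatFunc K)))

lemma psiEquiv_coe_ringHom (hT : Transcendental K f) :
    ((psiEquiv hT : RatFunc K ≃+* adjoin K {f}) : RatFunc K →+* adjoin K {f}) = psi hT :=
  RingHom.ext fun _ => rfl

lemma Fpoly_irreducible (hf : f ∉ Set.range (algebraMap K (RatFunc K))) :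
    Irreducible (Fpoly hf) := by
  have h2 := (MulEquiv.irreducible_iff (mapEquiv (psiEquiv (transcendental_f hf)))).mpr
    (GGm_irreducible hf)
  rw [mapEquiv_apply, psiEquiv_coe_ringHom, Polynomial.map_map] at h2
  exact h2

lemma aeval_Fpoly (hf : f ∉ Set.range (algebraMap K (RatFunc K))) :
    Polynomial.aeval (RatFunc.X : RatFunc K) (Fpoly hf) = 0 := by
  set hT := transcendental_f hf
  rw [Fpoly, Polynomial.aeval_def, Polynomial.eval₂_map]
  have hcomp : ((algebraMap (adjoin K {f}) (RatFunc K)).comp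
      ((psi hT).comp (algebraMap (Polynomial K) (RatFunc K))))
      = ((Polynomial.aeval f : Polynomial K →ₐ[K] RatFunc K) : Polynomial K →+* RatFunc K) := by
    refine RingHom.ext fun p => ?_
    have : (algebraMap (adjoin K {f}) (RatFunc K)) (psi hT
        (algebraMap (Polynomial K) (RatFunc K) p)) = phi hT
        (algebraMap (Polynomial K) (RatFunc K) p) := rfl
    simp only [RingHom.comp_apply, this, phi_algebraMap]
    rfl
  rw [hcomp, GG, eval₂_sub, eval₂_mul, eval₂_C]
  have hCcomp : (((Polynomial.aeval f : Polynomial K →ₐ[K] RatFunc K) :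
      Polynomial K →+* RatFunc K).comp (C : K →+* Polynomial K)) = algebraMap K (RatFunc K) := by
    refine RingHom.ext fun a => ?_
    simp
  rw [Polynomial.eval₂_map, Polynomial.eval₂_map, hCcomp]
  have haev : ∀ p : Polynomial K, eval₂ (algebraMap K (RatFunc K)) (RatFunc.X : RatFunc K) p
      = algebraMap (Polynomial K) (RatFunc K) p := by
    intro p
    rw [← Polynomial.aeval_def, aeval_ratfuncX]
  rw [haev, haev]
  have : ((Polynomial.aeval f : Polynomial K →ₐ[K] RatFunc K) :
      Polynomial K →+* RatFunc K) X = f := by simp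
  rw [this]
  exact key0 f

lemma Fpoly_natDegree (hf : f ∉ Set.range (algebraMap K (RatFunc K))) :
    (Fpoly hf).natDegree = f.num.natDegree ⊔ f.denom.natDegree := by
  rw [Fpoly, natDegree_map_eq_of_injective, GG_natDegree hf]
  exact (psi_bijective (transcendental_f hf)).1.comp
    (IsFractionRing.injective (Polynomial K) (RatFunc K))

lemma minpoly_X_natDegree (hf : f ∉ Set.range (algebraMap K (RatFunc K))) :
    (minpoly (adjoin K {f}) (RatFunc.X : RatFunc K)).natDegree
      = f.num.natDegree ⊔ f.denom.natDegree := by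
  have h := minpoly.eq_of_irreducible (Fpoly_irreducible hf) (aeval_Fpoly hf)
  rw [← h, natDegree_mul_C, Fpoly_natDegree hf]
  exact inv_ne_zero (leadingCoeff_ne_zero.mpr (Fpoly_irreducible hf).ne_zero)

lemma X_integral (hf : f ∉ Set.range (algebraMap K (RatFunc K))) :
    IsIntegral (adjoin K {f}) (RatFunc.X : RatFunc K) :=
  IsAlgebraic.isIntegral ⟨F0 f, F0_ne_zero hf, aeval_F0 f⟩

lemma adjoin_X_top (E : IntermediateField K (RatFunc K)) :
    adjoin E {(RatFunc.X : RatFunc K)} = ⊤ := by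
  rw [eq_top_iff]
  intro y _
  have hP : ∀ p : Polynomial K,
      algebraMap (Polynomial K) (RatFunc K) p ∈ adjoin ↥E {(RatFunc.X : RatFunc K)} := by
    intro p
    rw [← aeval_ratfuncX]
    have h1 : Polynomial.aeval (RatFunc.X : RatFunc K) p
        ∈ Algebra.adjoin K {(RatFunc.X : RatFunc K)} :=
      Polynomial.aeval_mem_adjoin_singleton K _
    have h2 : (IntermediateField.adjoin K {(RatFunc.X : RatFunc K)} :
        IntermediateField K (RatFunc K))
        ≤ (adjoin ↥E {(RatFunc.X : RatFunc K)}).restrictScalars K := by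
      rw [adjoin_le_iff]
      intro z hz
      rw [Set.mem_singleton_iff] at hz
      subst hz
      exact (mem_restrictScalars K).mpr (subset_adjoin _ _ rfl)
    exact (mem_restrictScalars K).mp (h2 (algebra_adjoin_le_adjoin K _ h1))
  induction y using RatFunc.induction_on with
  | f p q hq => exact div_mem (hP p) (hP q)

lemma finiteDimensional_over_adjoin (hf : f ∉ Set.range (algebraMap K (RatFunc K))) :
    FiniteDimensional (adjoin K {f}) (RatFunc K) := by
  have h := adjoin.finiteDimensional (X_integral hf)
  rw [adjoin_X_top] at h
  exact (topEquiv (F := ↥(adjoin K {f})) (E := RatFunc K)).toLinearEquiv.finiteDimensional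

lemma finrank_over_adjoin (hf : f ∉ Set.range (algebraMap K (RatFunc K))) :
    Module.finrank (adjoin K {f}) (RatFunc K) = f.num.natDegree ⊔ f.denom.natDegree := by
  have h := adjoin.finrank (X_integral hf)
  rw [adjoin_X_top, finrank_top'] at h
  rw [h, minpoly_X_natDegree hf]

/-! ### Fixing group -/

lemma fix_mem {y : RatFunc K} (hy : y ∈ (adjoin K {f} : IntermediateField K (RatFunc K)))
    (σ : RatFunc K ≃ₐ[K] RatFunc K) (hσ : σ f = f) : σ y = y := by
  have hσ' : σ ∈ MulAction.stabilizer (RatFunc K ≃ₐ[K] RatFunc K) f := by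
    rw [MulAction.mem_stabilizer_iff]
    exact hσ
  have hle : adjoin K {f}
      ≤ fixedField (MulAction.stabilizer (RatFunc K ≃ₐ[K] RatFunc K) f) := by
    rw [adjoin_le_iff]
    intro z hz
    rw [Set.mem_singleton_iff] at hz
    subst hz
    exact fun g => g.2
  exact (hle hy) ⟨σ, hσ'⟩

/-- The fixing group of `f` is the Galois group over `K⟮f⟯`. -/
def grpEquiv (f : RatFunc K) :
    {σ : RatFunc K ≃ₐ[K] RatFunc K // σ f = f}
      ≃ (RatFunc K ≃ₐ[adjoin K {f}] RatFunc K) where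
  toFun σp := AlgEquiv.ofRingEquiv (f := σp.1.toRingEquiv)
    (fun e => fix_mem e.2 σp.1 σp.2)
  invFun τ := ⟨τ.restrictScalars K, by
    have h := τ.commutes (⟨f, mem_adjoin_simple_self K f⟩ : adjoin K {f})
    simpa using h⟩
  left_inv σp := Subtype.ext (AlgEquiv.ext fun _ => rfl)
  right_inv τ := AlgEquiv.ext fun _ => rfl

end Luroth

open Luroth

/-- The degree of a rational function: the maximum of the degrees of its
numerator and denominator (in lowest terms). -/
noncomputable def RatFunc.deg {K : Type*} [Field K] (f : RatFunc K) : ℕ :=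
  max f.num.natDegree f.denom.natDegree

/-- If `|G_f| = deg f` then `K(f) ⊆ K(x)` is normal; conversely, if the extension
`K(f) ⊆ K(x)` is separable and normal, then `|G_f| = deg f`. -/
theorem normal_iff_card_fixingGroup {K : Type*} [Field K] (f : RatFunc K)
    (hf : f ∉ Set.range (algebraMap K (RatFunc K))) :
    (Nat.card {σ : RatFunc K ≃ₐ[K] RatFunc K // σ f = f} = f.deg →
      Normal (IntermediateField.adjoin K {f}) (RatFunc K)) ∧
    (Algebra.IsSeparable (IntermediateField.adjoin K {f}) (RatFunc K) →
      Normal (IntermediateField.adjoin K {f}) (RatFunc K) →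
      Nat.card {σ : RatFunc K ≃ₐ[K] RatFunc K // σ f = f} = f.deg) := by
  haveI hFD : FiniteDimensional (IntermediateField.adjoin K {f}) (RatFunc K) :=
    Luroth.finiteDimensional_over_adjoin hf
  have hrank : Module.finrank (IntermediateField.adjoin K {f}) (RatFunc K) = f.deg :=
    Luroth.finrank_over_adjoin hf
  have hcard : Nat.card {σ : RatFunc K ≃ₐ[K] RatFunc K // σ f = f}
      = Nat.card (RatFunc K ≃ₐ[IntermediateField.adjoin K {f}] RatFunc K) :=
    Nat.card_congr (Luroth.grpEquiv f)
  constructor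
  · intro h
    have h2 : Nat.card (RatFunc K ≃ₐ[IntermediateField.adjoin K {f}] RatFunc K)
        = Module.finrank (IntermediateField.adjoin K {f}) (RatFunc K) := by
      rw [← hcard, h, hrank]
    haveI : IsGalois (IntermediateField.adjoin K {f}) (RatFunc K) :=
      IsGalois.of_card_aut_eq_finrank _ _ h2
    exact IsGalois.to_normal
  · intro hsep hnorm
    haveI := hsep
    haveI := hnorm
    haveI : IsGalois (IntermediateField.adjoin K {f}) (RatFunc K) := ⟨⟩
    rw [hcard, IsGalois.card_aut_eq_finrank]
    exact hrank
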